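/- Let d ∈ ℕ, m ≥ 2, p ≥ 2, and let {P̄_t^i}_{i≥1,t∈[0,1]} and {Q_t^i}_{i≥1,t∈[0,1]} be families of linear operators on ⋃_{q≥0} C_q, both satisfying assumption (M), and satisfying assumptions (R(m,δ_m)) and (M_P). Then for every f ∈ C_p^{2(m+1)} there is a constant K(x) > 0 (depending on x, p, m and the constants in the assumptions, but not on n or the partition) such that for every partition 0 = t_0 < t_1 < ⋯ < t_n = 1, |(P̄^1_{t_1−t_0} P̄^2_{t_2−t_1} ⋯ P̄^n_{1−t_{n−1}} f)(x) − (Q^1_{t_1−t_0} Q^2_{t_2−t_1} ⋯ Q^n_{1−t_{n−1}} f)(x)| ≤ K(x) ‖f‖_{C_p^{2(m+1)}} Σ_{k=1}^n (t_k − t_{k−1}) δ_m(t_k − t_{k−1}). -/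

import Mathlib

open MeasureTheory Filter Set

/-- Composition of operators: `opCompFrom A s a j f = A^{a+1}_{s(a+1)} ⋯ A^{a+j}_{s(a+j)} f`,
i.e. the product `∏_{i=a+1}^{a+j} A^i_{s i}` applied to `f`. -/
def opCompFrom {E : Type*} (A : ℕ → ℝ → (E → ℝ) → (E → ℝ)) (s : ℕ → ℝ) :
    ℕ → ℕ → (E → ℝ) → (E → ℝ)
  | _, 0, f => f
  | a, j + 1, f => A (a + 1) (s (a + 1)) (opCompFrom A s (a + 1) j f)

/-- Assumption (M) for a family of operators `Q i t` on the spaces `C_p`. -/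
def AssumptionM {E : Type*} [NormedAddCommGroup E]
    (Q : ℕ → ℝ → (E → ℝ) → (E → ℝ)) : Prop :=
  (∀ p : ℕ, 2 ≤ p → ∃ K > 0, ∀ i : ℕ, ∀ t ∈ Set.Icc (0:ℝ) 1, ∀ (f : E → ℝ) (Cf : ℝ),
      (∀ x, |f x| ≤ Cf * (1 + ‖x‖ ^ p)) → ∀ x, |Q i t f x| ≤ K * Cf * (1 + ‖x‖ ^ p)) ∧
  (∀ i : ℕ, ∀ t ∈ Set.Icc (0:ℝ) 1, ∀ f g : E → ℝ, (∀ x, 0 ≤ f x) → (∀ x, f x ≤ g x) →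
      (∀ x, 0 ≤ Q i t f x) ∧ (∀ x, Q i t f x ≤ Q i t g x)) ∧
  (∀ i : ℕ, ∀ t ∈ Set.Icc (0:ℝ) 1, Q i t (fun _ => (1:ℝ)) = fun _ => (1:ℝ)) ∧
  (∀ p : ℕ, ∃ Kp, 0 ≤ Kp ∧ ∃ Kp', 0 ≤ Kp' ∧ ∀ i : ℕ, ∀ t ∈ Set.Icc (0:ℝ) 1, ∀ x : E,
      Q i t (fun y => ‖y‖ ^ p) x ≤ (1 + Kp * t) * ‖x‖ ^ p + Kp' * t)

/-- `f ∈ C_p^R` with `‖f‖_{C_p^R} ≤ N` : `f` is `C^R` and all its derivatives of order `≤ R`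
are bounded by `N (1 + ‖x‖^p)`. -/
def InCpm {E : Type*} [NormedAddCommGroup E] [NormedSpace ℝ E]
    (p R : ℕ) (N : ℝ) (f : E → ℝ) : Prop :=
  ContDiff ℝ (R : ℕ∞) f ∧ ∀ j ≤ R, ∀ x, ‖iteratedFDeriv ℝ j f x‖ ≤ N * (1 + ‖x‖ ^ p)

/-- "Snoc" form of the composition: peel off the last operator. -/
lemma opCompFrom_succ_right {E : Type*} (A : ℕ → ℝ → (E → ℝ) → (E → ℝ)) (s : ℕ → ℝ) :
    ∀ (j a : ℕ) (f : E → ℝ),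
      opCompFrom A s a (j + 1) f = opCompFrom A s a j (A (a + j + 1) (s (a + j + 1)) f) := by
  intro j
  induction j with
  | zero => intro a f; rfl
  | succ j ih =>
      intro a f
      have h1 : a + 1 + j + 1 = a + (j + 1) + 1 := by omega
      show A (a + 1) (s (a + 1)) (opCompFrom A s (a + 1) (j + 1) f) =
        A (a + 1) (s (a + 1))
          (opCompFrom A s (a + 1) j (A (a + (j + 1) + 1) (s (a + (j + 1) + 1)) f))
      rw [ih (a + 1) f, h1]

/-- Compositions of pointwise-linear operators respect subtraction. -/
lemma opCompFrom_sub {E : Type*} (Q : ℕ → ℝ → (E → ℝ) → (E → ℝ)) (s : ℕ → ℝ)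
    (hadd : ∀ i t (f g : E → ℝ), Q i t (f + g) = Q i t f + Q i t g)
    (hsmul : ∀ i t (c : ℝ) (f : E → ℝ), Q i t (c • f) = c • Q i t f) :
    ∀ (j a : ℕ) (f g : E → ℝ),
      opCompFrom Q s a j (f - g) = opCompFrom Q s a j f - opCompFrom Q s a j g := by
  have hsub : ∀ i t (f g : E → ℝ), Q i t (f - g) = Q i t f - Q i t g := by
    intro i t f g
    have h1 : f - g = f + (-1 : ℝ) • g := by
      funext y
      show f y - g y = f y + (-1 : ℝ) * g y
      ring
    rw [h1, hadd, hsmul]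
    funext y
    show Q i t f y + (-1 : ℝ) * Q i t g y = Q i t f y - Q i t g y
    ring
  intro j
  induction j with
  | zero => intro a f g; rfl
  | succ j ih =>
      intro a f g
      show Q (a + 1) (s (a + 1)) (opCompFrom Q s (a + 1) j (f - g)) = _
      rw [ih]
      exact hsub _ _ _ _

/-- Theorem `Th_Approx_Operators`: under assumptions (M) for both families, (R(m,δ_m)) and
(M_P), for `f ∈ C_p^{2(m+1)}` with norm bound `Nf`,
`|∏ P̄^i f (x) - ∏ Q^i f (x)| ≤ K(x) Nf Σ_k (t_k - t_{k-1}) δ_m(t_k - t_{k-1})`,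
uniformly over partitions `0 = t_0 < t_1 < ⋯ < t_n = 1`. -/
theorem stmt_1 (d : ℕ) (m p : ℕ) (hm : 2 ≤ m) (hp : 2 ≤ p)
    (P Q : ℕ → ℝ → ((EuclideanSpace ℝ (Fin d)) → ℝ) → ((EuclideanSpace ℝ (Fin d)) → ℝ))
    (hPlin_add : ∀ i t (f g : EuclideanSpace ℝ (Fin d) → ℝ), P i t (f + g) = P i t f + P i t g)
    (hPlin_smul : ∀ i t (c : ℝ) (f : EuclideanSpace ℝ (Fin d) → ℝ), P i t (c • f) = c • P i t f)
    (hQlin_add : ∀ i t (f g : EuclideanSpace ℝ (Fin d) → ℝ), Q i t (f + g) = Q i t f + Q i t g)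
    (hQlin_smul : ∀ i t (c : ℝ) (f : EuclideanSpace ℝ (Fin d) → ℝ), Q i t (c • f) = c • Q i t f)
    (hMP : AssumptionM P) (hMQ : AssumptionM Q)
    -- the function δ_m : increasing on [0,1], nonnegative, with δ_m(t)/t^{m-1} → 0 as t → 0⁺
    (δ : ℝ → ℝ) (hδmono : MonotoneOn δ (Set.Icc (0:ℝ) 1))
    (hδ0 : ∀ t ∈ Set.Icc (0:ℝ) 1, 0 ≤ δ t)
    (hδlim : Filter.Tendsto (fun t => δ t / t ^ (m - 1)) (nhdsWithin 0 (Set.Ioi 0)) (nhds 0))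
    -- assumption (R(m,δ_m))
    (hR : ∀ p' : ℕ, 2 ≤ p' → ∃ q : ℕ, ∃ K' > 0, ∀ i : ℕ, ∀ t ∈ Set.Icc (0:ℝ) 1,
      ∀ (f : EuclideanSpace ℝ (Fin d) → ℝ) (Nf : ℝ), InCpm p' (2 * (m + 1)) Nf f →
        ∀ x, |P i t f x - Q i t f x| ≤ K' * t * δ t * Nf * (1 + ‖x‖ ^ q))
    -- assumption (M_P)
    (hMPprod : ∃ C' > 0, ∀ (f : EuclideanSpace ℝ (Fin d) → ℝ) (Nf : ℝ),
      InCpm p (2 * (m + 1)) Nf f → ∀ (n k : ℕ), k + 1 ≤ n → ∀ s : ℕ → ℝ,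
        (∀ i, k + 1 ≤ i → i ≤ n → s i ∈ Set.Icc (0:ℝ) 1) →
        InCpm p (2 * (m + 1)) (C' * Nf) (opCompFrom P s k (n - k) f)) :
    ∀ x : EuclideanSpace ℝ (Fin d), ∃ K > 0,
      ∀ (f : EuclideanSpace ℝ (Fin d) → ℝ) (Nf : ℝ), InCpm p (2 * (m + 1)) Nf f →
      ∀ (n : ℕ), 0 < n → ∀ (t : ℕ → ℝ), t 0 = 0 → t n = 1 → (∀ i < n, t i < t (i + 1)) →
        |opCompFrom P (fun i => t i - t (i - 1)) 0 n f x -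
            opCompFrom Q (fun i => t i - t (i - 1)) 0 n f x| ≤
          K * Nf * ∑ k ∈ Finset.Icc 1 n, (t k - t (k - 1)) * δ (t k - t (k - 1)) := by
  intro x
  obtain ⟨q, K', hK'pos, hRq⟩ := hR p hp
  obtain ⟨C', hC'pos, hMPp⟩ := hMPprod
  obtain ⟨Kq, hKq0, Kq', hKq'0, hmom⟩ := hMQ.2.2.2 q
  set M : ℝ := Kq + Kq' with hM
  have hM0 : 0 ≤ M := by simp only [hM]; linarith
  set C'' : ℝ := max C' 1 with hC''
  have hC''1 : (1:ℝ) ≤ C'' := le_max_right _ _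
  have hC''pos : (0:ℝ) < C'' := lt_of_lt_of_le one_pos hC''1
  have hC'le : C' ≤ C'' := le_max_left _ _
  have hxq : (0:ℝ) < 1 + ‖x‖ ^ q := by positivity
  refine ⟨K' * C'' * Real.exp M * (1 + ‖x‖ ^ q),
    mul_pos (mul_pos (mul_pos hK'pos hC''pos) (Real.exp_pos M)) hxq, ?_⟩
  intro f Nf hf n hn t ht0 htn hinc
  set s : ℕ → ℝ := fun i => t i - t (i - 1) with hs
  -- Nf is nonnegative
  have hNf0 : 0 ≤ Nf := by
    have h0 := hf.2 0 (Nat.zero_le _) (0 : EuclideanSpace ℝ (Fin d))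
    have hpne : p ≠ 0 := by omega
    rw [norm_zero, zero_pow hpne, add_zero, mul_one] at h0
    exact le_trans (norm_nonneg _) h0
  -- monotonicity of the partition
  have htmono : ∀ i j, i ≤ j → j ≤ n → t i ≤ t j := by
    have key : ∀ (i k : ℕ), i + k ≤ n → t i ≤ t (i + k) := by
      intro i k
      induction k with
      | zero => intro _; simp
      | succ k ih =>
          intro h
          have h1 : t i ≤ t (i + k) := ih (by omega)
          have h2 : t (i + k) < t (i + k + 1) := hinc (i + k) (by omega)
          have : i + (k + 1) = i + k + 1 := by omega
          rw [this]
          linarith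
    intro i j hij hjn
    obtain ⟨k, rfl⟩ : ∃ k, j = i + k := ⟨j - i, by omega⟩
    exact key i k hjn
  have ht01 : ∀ i, i ≤ n → 0 ≤ t i ∧ t i ≤ 1 := by
    intro i hi
    constructor
    · have := htmono 0 i (Nat.zero_le _) hi
      linarith [this, ht0.le, ht0.ge]
    · have := htmono i n hi le_rfl
      linarith [this, htn.le]
  have hsIcc : ∀ i, 1 ≤ i → i ≤ n → s i ∈ Set.Icc (0:ℝ) 1 := by
    intro i h1 h2
    obtain ⟨j, rfl⟩ : ∃ j, i = j + 1 := ⟨i - 1, by omega⟩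
    have hl : t j < t (j + 1) := hinc j (by omega)
    have hsv : s (j + 1) = t (j + 1) - t j := by
      simp only [hs, Nat.add_sub_cancel]
    rw [hsv]
    constructor
    · linarith
    · have h3 := (ht01 (j + 1) h2).2
      have h4 := (ht01 j (by omega)).1
      linarith
  -- monotonicity of each Q operator
  have hQmono : ∀ i t', t' ∈ Set.Icc (0:ℝ) 1 →
      ∀ (g₁ g₂ : EuclideanSpace ℝ (Fin d) → ℝ), (∀ y, g₁ y ≤ g₂ y) →
      ∀ y, Q i t' g₁ y ≤ Q i t' g₂ y := by
    intro i t' ht' g₁ g₂ h12 y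
    have hpos := (hMQ.2.1 i t' ht' (g₂ - g₁) (g₂ - g₁)
      (fun z => sub_nonneg.2 (h12 z)) (fun z => le_rfl)).1 y
    have hadd := hQlin_add i t' g₁ (g₂ - g₁)
    have heq : g₁ + (g₂ - g₁) = g₂ := by funext z; simp
    rw [heq] at hadd
    have h := congrFun hadd y
    simp only [Pi.add_apply] at h
    linarith
  -- one-step moment bound
  have hstep : ∀ i t', t' ∈ Set.Icc (0:ℝ) 1 → ∀ c : ℝ, 0 ≤ c →
      ∀ g : EuclideanSpace ℝ (Fin d) → ℝ, (∀ y, |g y| ≤ c * (1 + ‖y‖ ^ q)) →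
      ∀ y, |Q i t' g y| ≤ (c * Real.exp (M * t')) * (1 + ‖y‖ ^ q) := by
    intro i t' ht' c hc g hg y
    set φ : EuclideanSpace ℝ (Fin d) → ℝ := fun z => c * (1 + ‖z‖ ^ q) with hφ
    have hφeq : Q i t' φ = fun z => c * (1 + Q i t' (fun w => ‖w‖ ^ q) z) := by
      have h1 : φ = c • ((fun _ => (1:ℝ)) + fun w => ‖w‖ ^ q) := by
        funext z; simp [hφ]
      rw [h1, hQlin_smul, hQlin_add, hMQ.2.2.1 i t' ht']
      funext z; simp
    have hub : Q i t' g y ≤ Q i t' φ y :=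
      hQmono i t' ht' g φ (fun z => (abs_le.1 (hg z)).2) y
    have hlb : Q i t' (-φ) y ≤ Q i t' g y :=
      hQmono i t' ht' (-φ) g (fun z => by
        have := (abs_le.1 (hg z)).1
        simpa [hφ] using this) y
    have hnegφ : Q i t' (-φ) = -Q i t' φ := by
      have h2 : (-φ) = (-1 : ℝ) • φ := by funext z; simp
      rw [h2, hQlin_smul]
      funext z; simp
    rw [hnegφ] at hlb
    simp only [Pi.neg_apply] at hlb
    have hφbound : Q i t' φ y ≤ (c * Real.exp (M * t')) * (1 + ‖y‖ ^ q) := by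
      rw [hφeq]
      have hmq := hmom i t' ht' y
      have hexp : 1 + M * t' ≤ Real.exp (M * t') := by
        linarith [Real.add_one_le_exp (M * t')]
      have hr : (0:ℝ) ≤ ‖y‖ ^ q := pow_nonneg (norm_nonneg _) q
      have ht'0 : (0:ℝ) ≤ t' := ht'.1
      calc c * (1 + Q i t' (fun w => ‖w‖ ^ q) y)
          ≤ c * (1 + ((1 + Kq * t') * ‖y‖ ^ q + Kq' * t')) := by
            apply mul_le_mul_of_nonneg_left _ hc
            linarith
        _ ≤ c * ((1 + M * t') * (1 + ‖y‖ ^ q)) := by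
            apply mul_le_mul_of_nonneg_left _ hc
            simp only [hM]
            nlinarith [mul_nonneg hKq0 ht'0, mul_nonneg (mul_nonneg hKq'0 ht'0) hr]
        _ ≤ c * (Real.exp (M * t') * (1 + ‖y‖ ^ q)) := by
            apply mul_le_mul_of_nonneg_left _ hc
            apply mul_le_mul_of_nonneg_right hexp
            positivity
        _ = (c * Real.exp (M * t')) * (1 + ‖y‖ ^ q) := by ring
    rw [abs_le]
    exact ⟨by linarith, le_trans hub hφbound⟩
  -- iterated moment bound
  have hmomQ : ∀ (j a : ℕ), (∀ i, a + 1 ≤ i → i ≤ a + j → s i ∈ Set.Icc (0:ℝ) 1) →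
      ∀ c : ℝ, 0 ≤ c → ∀ g : EuclideanSpace ℝ (Fin d) → ℝ,
      (∀ y, |g y| ≤ c * (1 + ‖y‖ ^ q)) →
      ∀ y, |opCompFrom Q s a j g y| ≤
        (c * Real.exp (M * ∑ i ∈ Finset.Ico (a + 1) (a + j + 1), s i)) * (1 + ‖y‖ ^ q) := by
    intro j
    induction j with
    | zero =>
        intro a _ c hc g hg y
        simp only [Nat.add_zero, Finset.Ico_self, Finset.sum_empty, mul_zero,
          Real.exp_zero, mul_one]
        exact hg y
    | succ j ih =>
        intro a hsI c hc g hg y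
        have hsum : ∑ i ∈ Finset.Ico (a + 1) (a + (j + 1) + 1), s i
            = s (a + 1) + ∑ i ∈ Finset.Ico (a + 1 + 1) (a + 1 + j + 1), s i := by
          have h2 : a + (j + 1) + 1 = a + 1 + j + 1 := by omega
          rw [h2, Finset.sum_eq_sum_Ico_succ_bot (by omega : a + 1 < a + 1 + j + 1)]
        have hinner := ih (a + 1) (fun i hi1 hi2 => hsI i (by omega) (by omega)) c hc g hg
        have hc' : 0 ≤ c * Real.exp (M * ∑ i ∈ Finset.Ico (a + 1 + 1) (a + 1 + j + 1), s i) :=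
          mul_nonneg hc (Real.exp_pos _).le
        have hkey := hstep (a + 1) (s (a + 1)) (hsI (a + 1) le_rfl (by omega)) _ hc'
          (opCompFrom Q s (a + 1) j g) hinner y
        show |Q (a + 1) (s (a + 1)) (opCompFrom Q s (a + 1) j g) y| ≤ _
        refine le_trans hkey (le_of_eq ?_)
        rw [hsum, mul_add M, Real.exp_add]
        ring
  -- telescoping
  set H : ℕ → (EuclideanSpace ℝ (Fin d) → ℝ) :=
    fun k => opCompFrom Q s 0 k (opCompFrom P s k (n - k) f) with hH
  have hH0 : H 0 = opCompFrom P s 0 n f := rfl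
  have hHn : H n = opCompFrom Q s 0 n f := by
    simp only [hH, Nat.sub_self]
    rfl
  have htele : opCompFrom P s 0 n f x - opCompFrom Q s 0 n f x
      = ∑ k ∈ Finset.range n, (H k x - H (k + 1) x) := by
    rw [Finset.sum_range_sub' (fun k => H k x), ← hH0, ← hHn]
  -- per-term bound
  have hterm : ∀ k ∈ Finset.range n, |H k x - H (k + 1) x| ≤
      (K' * C'' * Real.exp M * (1 + ‖x‖ ^ q)) * Nf * (s (k + 1) * δ (s (k + 1))) := by
    intro k hk
    have hkn : k < n := Finset.mem_range.1 hk
    set g : EuclideanSpace ℝ (Fin d) → ℝ := opCompFrom P s (k + 1) (n - (k + 1)) f with hg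
    have hInC : InCpm p (2 * (m + 1)) (C'' * Nf) g := by
      by_cases hcase : k + 1 < n
      · have h1 := hMPp f Nf hf n (k + 1) (by omega) s
          (fun i hi1 hi2 => hsIcc i (by omega) hi2)
        exact ⟨h1.1, fun j hj y => le_trans (h1.2 j hj y)
          (mul_le_mul_of_nonneg_right (mul_le_mul_of_nonneg_right hC'le hNf0)
            (by positivity))⟩
      · have hkn1 : k + 1 = n := by omega
        have hg0 : g = f := by rw [hg, hkn1, Nat.sub_self]; rfl
        rw [hg0]
        exact ⟨hf.1, fun j hj y => le_trans (hf.2 j hj y)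
          (mul_le_mul_of_nonneg_right (le_mul_of_one_le_left hNf0 hC''1)
            (by positivity))⟩
    have hs1 : s (k + 1) ∈ Set.Icc (0:ℝ) 1 := hsIcc (k + 1) (by omega) (by omega)
    have hD := hRq (k + 1) (s (k + 1)) hs1 g (C'' * Nf) hInC
    set D : EuclideanSpace ℝ (Fin d) → ℝ :=
      P (k + 1) (s (k + 1)) g - Q (k + 1) (s (k + 1)) g with hDdef
    have hDb : ∀ y, |D y| ≤ (K' * s (k + 1) * δ (s (k + 1)) * (C'' * Nf)) * (1 + ‖y‖ ^ q) :=
      fun y => hD y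
    have hcD : 0 ≤ K' * s (k + 1) * δ (s (k + 1)) * (C'' * Nf) :=
      mul_nonneg (mul_nonneg (mul_nonneg hK'pos.le hs1.1) (hδ0 _ hs1))
        (mul_nonneg hC''pos.le hNf0)
    have hid : H k x - H (k + 1) x = opCompFrom Q s 0 k D x := by
      have e1 : opCompFrom P s k (n - k) f = P (k + 1) (s (k + 1)) g := by
        rw [hg]
        have h2 : n - k = (n - (k + 1)) + 1 := by omega
        rw [h2]
        rfl
      have e2 : H (k + 1) = opCompFrom Q s 0 k (Q (k + 1) (s (k + 1)) g) := by
        show opCompFrom Q s 0 (k + 1) (opCompFrom P s (k + 1) (n - (k + 1)) f) = _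
        rw [opCompFrom_succ_right, show 0 + k + 1 = k + 1 from by omega, ← hg]
      have e3 : H k = opCompFrom Q s 0 k (P (k + 1) (s (k + 1)) g) := by
        show opCompFrom Q s 0 k (opCompFrom P s k (n - k) f) = _
        rw [e1]
      rw [e2, e3, hDdef, opCompFrom_sub Q s hQlin_add hQlin_smul]
      simp
    rw [hid]
    have hb := hmomQ k 0 (fun i hi1 hi2 => hsIcc i hi1 (by omega)) _ hcD D hDb x
    have hsumle : ∑ i ∈ Finset.Ico (0 + 1) (0 + k + 1), s i ≤ 1 := by
      have hsum_eq : ∑ i ∈ Finset.Ico (0 + 1) (0 + k + 1), s i = t k := by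
        rw [Finset.sum_Ico_eq_sum_range, show 0 + k + 1 - (0 + 1) = k from by omega]
        have hterm_eq : ∀ i, s (0 + 1 + i) = t (i + 1) - t i := by
          intro i
          simp only [hs]
          rw [show 0 + 1 + i = i + 1 from by omega, Nat.add_sub_cancel]
        rw [Finset.sum_congr rfl (fun i _ => hterm_eq i), Finset.sum_range_sub t, ht0,
          sub_zero]
      rw [hsum_eq]
      exact (ht01 k (by omega)).2
    have hexpm : Real.exp (M * ∑ i ∈ Finset.Ico (0 + 1) (0 + k + 1), s i) ≤ Real.exp M :=
      Real.exp_le_exp.2 (mul_le_of_le_one_right hM0 hsumle)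
    calc |opCompFrom Q s 0 k D x|
        ≤ (K' * s (k + 1) * δ (s (k + 1)) * (C'' * Nf) *
            Real.exp (M * ∑ i ∈ Finset.Ico (0 + 1) (0 + k + 1), s i)) * (1 + ‖x‖ ^ q) := hb
      _ ≤ (K' * s (k + 1) * δ (s (k + 1)) * (C'' * Nf) * Real.exp M) * (1 + ‖x‖ ^ q) := by
          apply mul_le_mul_of_nonneg_right _ hxq.le
          exact mul_le_mul_of_nonneg_left hexpm hcD
      _ = (K' * C'' * Real.exp M * (1 + ‖x‖ ^ q)) * Nf * (s (k + 1) * δ (s (k + 1))) := by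
          ring
  -- put everything together
  calc |opCompFrom P s 0 n f x - opCompFrom Q s 0 n f x|
      = |∑ k ∈ Finset.range n, (H k x - H (k + 1) x)| := by rw [htele]
    _ ≤ ∑ k ∈ Finset.range n, |H k x - H (k + 1) x| := Finset.abs_sum_le_sum_abs _ _
    _ ≤ ∑ k ∈ Finset.range n,
          (K' * C'' * Real.exp M * (1 + ‖x‖ ^ q)) * Nf * (s (k + 1) * δ (s (k + 1))) :=
        Finset.sum_le_sum hterm
    _ = (K' * C'' * Real.exp M * (1 + ‖x‖ ^ q)) * Nf *
          ∑ k ∈ Finset.range n, s (k + 1) * δ (s (k + 1)) := by rw [← Finset.mul_sum]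
    _ = (K' * C'' * Real.exp M * (1 + ‖x‖ ^ q)) * Nf *
          ∑ k ∈ Finset.Icc 1 n, (t k - t (k - 1)) * δ (t k - t (k - 1)) := by
        congr 1
        rw [← Finset.Ico_add_one_right_eq_Icc, Finset.sum_Ico_eq_sum_range,
          show n + 1 - 1 = n from by omega]
        refine Finset.sum_congr rfl fun i _ => ?_
        simp only [hs]
        rw [show 1 + i = i + 1 from by omega]
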